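/- arXiv:2012.11386 — 3 statements merged into one kernel-verified Lean document; each statement's English description precedes it below -/
import Mathlib

section
/- Let $X$ be a Banach space, $\alpha > 0$, $K \geq 1$, $0 \leq \delta < \frac{1-e^{-\alpha}}{1+e^{-\alpha}}$. Let $G : \mathbb{Z} \times \mathbb{Z} \to \mathcal{L}(X)$ satisfy $\|G(n,k)\| \leq K e^{-\alpha|n-k|}$ for all $n, k$. Let $B : \mathbb{Z} \to \mathcal{L}(X)$ with $\|B(k)\| \leq \delta K^{-1}$ for all $k$, and let $f \in \ell^\infty(\mathbb{Z}, X)$. Then the operator $\Gamma$ on $\ell^\infty(\mathbb{Z}, X)$ defined by $(\Gamma x)_n := \sum_{k=-\infty}^{+\infty} G(n,k+1)(B(k) x_k + f_k)$ is well-defined (maps $\ell^\infty$ into $\ell^\infty$) and is a contraction with Lipschitz constant at most $\delta \frac{1+e^{-\alpha}}{1-e^{-\alpha}} < 1$; in particular $\Gamma$ has a unique fixed point in $\ell^\infty(\mathbb{Z}, X)$. -/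
/-- The operator `Γ` is well defined on `ℓ∞(ℤ,X)`, is a contraction with constant
`δ(1+e^{-α})/(1-e^{-α}) < 1`, and has a unique fixed point. -/
theorem stmt_2 {X : Type*} [NormedAddCommGroup X] [NormedSpace ℝ X] [CompleteSpace X]
    (α K δ : ℝ) (hα : 0 < α) (hK : 1 ≤ K)
    (hδ0 : 0 ≤ δ) (hδ : δ < (1 - Real.exp (-α)) / (1 + Real.exp (-α)))
    (G : ℤ → ℤ → X →L[ℝ] X)
    (hG : ∀ n k : ℤ, ‖G n k‖ ≤ K * Real.exp (-α * ((|n - k| : ℤ) : ℝ)))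
    (B : ℤ → X →L[ℝ] X) (hB : ∀ k, ‖B k‖ ≤ δ * K⁻¹)
    (f : ℤ → X) (hf : ∃ C, ∀ n, ‖f n‖ ≤ C) :
    (∀ x : ℤ → X, (∃ C, ∀ n, ‖x n‖ ≤ C) →
      (∀ n : ℤ, Summable fun k : ℤ => G n (k + 1) (B k (x k) + f k)) ∧
      (∃ C, ∀ n : ℤ, ‖∑' k : ℤ, G n (k + 1) (B k (x k) + f k)‖ ≤ C)) ∧
    (∀ x y : ℤ → X, (∃ C, ∀ n, ‖x n‖ ≤ C) → (∃ C, ∀ n, ‖y n‖ ≤ C) → ∀ n : ℤ,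
      ‖(∑' k : ℤ, G n (k + 1) (B k (x k) + f k)) -
          ∑' k : ℤ, G n (k + 1) (B k (y k) + f k)‖ ≤
        δ * (1 + Real.exp (-α)) / (1 - Real.exp (-α)) * ⨆ m : ℤ, ‖x m - y m‖) ∧
    δ * (1 + Real.exp (-α)) / (1 - Real.exp (-α)) < 1 ∧
    (∃! x : ℤ → X, (∃ C, ∀ n, ‖x n‖ ≤ C) ∧
      ∀ n : ℤ, x n = ∑' k : ℤ, G n (k + 1) (B k (x k) + f k)) := by
  set r : ℝ := Real.exp (-α) with hrdef
  have hr0 : (0:ℝ) < r := Real.exp_pos _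
  have hr1 : r < 1 := Real.exp_lt_one_iff.mpr (by linarith)
  have h1r : (0:ℝ) < 1 - r := by linarith
  have hK0 : (0:ℝ) < K := lt_of_lt_of_le one_pos hK
  obtain ⟨Cf, hCf⟩ := hf
  have hCf0 : 0 ≤ Cf := le_trans (norm_nonneg _) (hCf 0)
  -- geometric sums over ℤ
  have hnat : Summable (fun m : ℕ => r ^ m) := summable_geometric_of_lt_one hr0.le hr1
  have hsum : Summable (fun j : ℤ => r ^ j.natAbs) := by
    apply Summable.of_nat_of_neg <;> simpa using hnat
  have htsum : (∑' j : ℤ, r ^ j.natAbs) = (1 + r) / (1 - r) := by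
    rw [Summable.tsum_of_nat_of_neg (by simpa using hnat) (by simpa using hnat)]
    simp only [Int.natAbs_natCast, Int.natAbs_neg, Int.natAbs_zero, pow_zero]
    rw [tsum_geometric_of_lt_one hr0.le hr1]
    field_simp
    ring
  have hshiftS : ∀ n : ℤ, Summable (fun k : ℤ => r ^ (n - (k + 1)).natAbs) := by
    intro n
    have h := hsum.comp_injective (Equiv.subLeft (n - 1)).injective
    have e : (fun k : ℤ => r ^ (n - (k + 1)).natAbs)
        = (fun j : ℤ => r ^ j.natAbs) ∘ (Equiv.subLeft (n - 1)) := by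
      funext k
      simp only [Function.comp, Equiv.subLeft_apply]
      congr 1
      omega
    rw [e]; exact h
  have hshiftT : ∀ n : ℤ, (∑' k : ℤ, r ^ (n - (k + 1)).natAbs) = (1 + r) / (1 - r) := by
    intro n
    have h := (Equiv.subLeft (n - 1)).tsum_eq (fun j : ℤ => r ^ j.natAbs)
    rw [← htsum, ← h]
    congr 1
    funext k
    simp only [Equiv.subLeft_apply]
    congr 1
    omega
  -- norm bound for G in terms of powers of r
  have hGr : ∀ n k : ℤ, ‖G n k‖ ≤ K * r ^ (n - k).natAbs := by
    intro n k
    have h := hG n k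
    have e1 : ((|n - k| : ℤ) : ℝ) = ((n - k).natAbs : ℝ) := by
      rw [Int.cast_abs, Nat.cast_natAbs, Int.cast_abs]
    have e2 : Real.exp (-α * ((n - k).natAbs : ℝ)) = r ^ (n - k).natAbs := by
      rw [mul_comm, Real.exp_nat_mul]
    rwa [e1, e2] at h
  -- key estimate
  have key : ∀ (v : ℤ → X) (M : ℝ), (∀ k, ‖v k‖ ≤ M) → ∀ n : ℤ,
      Summable (fun k : ℤ => G n (k + 1) (v k)) ∧
      ‖∑' k : ℤ, G n (k + 1) (v k)‖ ≤ K * M * ((1 + r) / (1 - r)) := by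
    intro v M hM n
    have hM0 : 0 ≤ M := le_trans (norm_nonneg _) (hM 0)
    have hbd : ∀ k : ℤ, ‖G n (k + 1) (v k)‖ ≤ K * M * r ^ (n - (k + 1)).natAbs := by
      intro k
      calc ‖G n (k + 1) (v k)‖ ≤ ‖G n (k + 1)‖ * ‖v k‖ := (G n (k + 1)).le_opNorm _
        _ ≤ (K * r ^ (n - (k + 1)).natAbs) * M :=
          mul_le_mul (hGr n (k + 1)) (hM k) (norm_nonneg _) (by positivity)
        _ = K * M * r ^ (n - (k + 1)).natAbs := by ring
    have hs : Summable (fun k : ℤ => ‖G n (k + 1) (v k)‖) :=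
      Summable.of_nonneg_of_le (fun k => norm_nonneg _) hbd ((hshiftS n).mul_left (K * M))
    refine ⟨hs.of_norm, ?_⟩
    calc ‖∑' k : ℤ, G n (k + 1) (v k)‖ ≤ ∑' k : ℤ, ‖G n (k + 1) (v k)‖ :=
          norm_tsum_le_tsum_norm hs
      _ ≤ ∑' k : ℤ, K * M * r ^ (n - (k + 1)).natAbs :=
          Summable.tsum_le_tsum hbd hs ((hshiftS n).mul_left (K * M))
      _ = K * M * ∑' k : ℤ, r ^ (n - (k + 1)).natAbs := tsum_mul_left
      _ = K * M * ((1 + r) / (1 - r)) := by rw [hshiftT n]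
  -- bound for B x + f
  have hv : ∀ (x : ℤ → X) (C : ℝ), (∀ k, ‖x k‖ ≤ C) →
      ∀ k : ℤ, ‖B k (x k) + f k‖ ≤ δ * K⁻¹ * C + Cf := by
    intro x C hC k
    have hC0 : 0 ≤ C := le_trans (norm_nonneg _) (hC 0)
    calc ‖B k (x k) + f k‖ ≤ ‖B k (x k)‖ + ‖f k‖ := norm_add_le _ _
      _ ≤ δ * K⁻¹ * C + Cf := by
        refine add_le_add ?_ (hCf k)
        calc ‖B k (x k)‖ ≤ ‖B k‖ * ‖x k‖ := (B k).le_opNorm _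
          _ ≤ (δ * K⁻¹) * C :=
            mul_le_mul (hB k) (hC k) (norm_nonneg _) (by positivity)
  -- Part 1
  have part1 : ∀ x : ℤ → X, (∃ C, ∀ n, ‖x n‖ ≤ C) →
      (∀ n : ℤ, Summable fun k : ℤ => G n (k + 1) (B k (x k) + f k)) ∧
      (∃ C, ∀ n : ℤ, ‖∑' k : ℤ, G n (k + 1) (B k (x k) + f k)‖ ≤ C) := by
    rintro x ⟨C, hC⟩
    exact ⟨fun n => (key _ _ (hv x C hC) n).1,
      ⟨K * (δ * K⁻¹ * C + Cf) * ((1 + r) / (1 - r)), fun n => (key _ _ (hv x C hC) n).2⟩⟩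
  -- Part 2 : contraction estimate
  have part2 : ∀ x y : ℤ → X, (∃ C, ∀ n, ‖x n‖ ≤ C) → (∃ C, ∀ n, ‖y n‖ ≤ C) → ∀ n : ℤ,
      ‖(∑' k : ℤ, G n (k + 1) (B k (x k) + f k)) -
          ∑' k : ℤ, G n (k + 1) (B k (y k) + f k)‖ ≤
        δ * (1 + r) / (1 - r) * ⨆ m : ℤ, ‖x m - y m‖ := by
    rintro x y ⟨Cx, hCx⟩ ⟨Cy, hCy⟩ n
    have hbdd : BddAbove (Set.range fun m : ℤ => ‖x m - y m‖) := by
      refine ⟨Cx + Cy, ?_⟩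
      rintro _ ⟨m, rfl⟩
      exact (norm_sub_le _ _).trans (add_le_add (hCx m) (hCy m))
    set D := ⨆ m : ℤ, ‖x m - y m‖ with hDdef
    have hD : ∀ k : ℤ, ‖x k - y k‖ ≤ D := fun k => le_ciSup hbdd k
    have hvk : ∀ k : ℤ, ‖B k (x k - y k)‖ ≤ δ * K⁻¹ * D := by
      intro k
      have hD0 : 0 ≤ D := le_trans (norm_nonneg _) (hD 0)
      calc ‖B k (x k - y k)‖ ≤ ‖B k‖ * ‖x k - y k‖ := (B k).le_opNorm _
        _ ≤ (δ * K⁻¹) * D := mul_le_mul (hB k) (hD k) (norm_nonneg _) (by positivity)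
    have hdiff : (∑' k : ℤ, G n (k + 1) (B k (x k) + f k)) -
        (∑' k : ℤ, G n (k + 1) (B k (y k) + f k))
        = ∑' k : ℤ, G n (k + 1) (B k (x k - y k)) := by
      rw [← Summable.tsum_sub (key _ _ (hv x Cx hCx) n).1 (key _ _ (hv y Cy hCy) n).1]
      congr 1
      funext k
      rw [← map_sub (G n (k + 1))]
      congr 1
      simp [map_sub]
    rw [hdiff]
    have h := (key _ _ hvk n).2
    have heq : K * (δ * K⁻¹ * D) * ((1 + r) / (1 - r)) = δ * (1 + r) / (1 - r) * D := by
      field_simp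
    rw [heq] at h
    exact h
  -- Part 3
  have hL1 : δ * (1 + r) / (1 - r) < 1 := by
    rw [div_lt_one h1r]
    have := (lt_div_iff₀ (by linarith : (0:ℝ) < 1 + r)).mp hδ
    linarith
  have hL0 : 0 ≤ δ * (1 + r) / (1 - r) := div_nonneg (by positivity) h1r.le
  refine ⟨part1, part2, hL1, ?_⟩
  -- Part 4 : fixed point via contraction mapping on bounded continuous functions
  set L : ℝ := δ * (1 + r) / (1 - r) with hLdef
  have bd : ∀ u : BoundedContinuousFunction ℤ X, ∀ n : ℤ,
      ‖∑' k : ℤ, G n (k + 1) (B k (u k) + f k)‖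
        ≤ K * (δ * K⁻¹ * ‖u‖ + Cf) * ((1 + r) / (1 - r)) :=
    fun u n => (key _ _ (hv u ‖u‖ (fun m => u.norm_coe_le_norm m)) n).2
  set Γ : BoundedContinuousFunction ℤ X → BoundedContinuousFunction ℤ X := fun u =>
    BoundedContinuousFunction.ofNormedAddCommGroup
      (fun n => ∑' k : ℤ, G n (k + 1) (B k (u k) + f k))
      continuous_of_discreteTopology
      (K * (δ * K⁻¹ * ‖u‖ + Cf) * ((1 + r) / (1 - r))) (bd u) with hΓdef
  have hΓcoe : ∀ (u : BoundedContinuousFunction ℤ X) (n : ℤ),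
      Γ u n = ∑' k : ℤ, G n (k + 1) (B k (u k) + f k) := fun u n => rfl
  have hlip : LipschitzWith (Real.toNNReal L) Γ := by
    apply LipschitzWith.of_dist_le_mul
    intro u v
    rw [Real.coe_toNNReal L hL0]
    rw [BoundedContinuousFunction.dist_le (mul_nonneg hL0 dist_nonneg)]
    intro n
    rw [dist_eq_norm, hΓcoe, hΓcoe]
    calc ‖(∑' k : ℤ, G n (k + 1) (B k (u k) + f k)) -
            ∑' k : ℤ, G n (k + 1) (B k (v k) + f k)‖
        ≤ L * ⨆ m : ℤ, ‖u m - v m‖ :=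
          part2 u v ⟨‖u‖, fun m => u.norm_coe_le_norm m⟩
            ⟨‖v‖, fun m => v.norm_coe_le_norm m⟩ n
      _ ≤ L * dist u v := by
          refine mul_le_mul_of_nonneg_left (ciSup_le fun m => ?_) hL0
          rw [← dist_eq_norm]
          exact BoundedContinuousFunction.dist_coe_le_dist m
  have hcontr : ContractingWith (Real.toNNReal L) Γ := by
    refine ⟨?_, hlip⟩
    rw [← NNReal.coe_lt_coe, Real.coe_toNNReal L hL0, NNReal.coe_one]
    exact hL1
  set z : BoundedContinuousFunction ℤ X := ContractingWith.fixedPoint Γ hcontr with hzdef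
  have hzfix : Γ z = z := hcontr.fixedPoint_isFixedPt
  refine ⟨⇑z, ⟨⟨‖z‖, fun m => z.norm_coe_le_norm m⟩, fun n => ?_⟩, ?_⟩
  · conv_lhs => rw [← hzfix]
    exact hΓcoe z n
  · rintro y ⟨⟨C, hC⟩, hy⟩
    set y' : BoundedContinuousFunction ℤ X :=
      BoundedContinuousFunction.ofNormedAddCommGroup y continuous_of_discreteTopology C hC
      with hy'def
    have hy'fix : Function.IsFixedPt Γ y' := by
      apply BoundedContinuousFunction.ext
      intro n
      rw [hΓcoe]
      exact (hy n).symm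
    have : y' = z := hcontr.fixedPoint_unique hy'fix
    funext n
    calc y n = y' n := rfl
      _ = z n := by rw [this]
end

section
/- Let $X$ be a Banach space, $\alpha > 0$, $K \geq 1$, $0 \leq \delta < \frac{1-e^{-\alpha}}{1+e^{-\alpha}}$, let $G : \mathbb{Z} \times \mathbb{Z} \to \mathcal{L}(X)$ satisfy $\|G(n,k)\| \leq K e^{-\alpha|n-k|}$, let $B : \mathbb{Z} \to \mathcal{L}(X)$ with $\|B(k)\| \leq \delta K^{-1}$ for all $k$, and let $f \in \ell^\infty(\mathbb{Z}, X)$. If $x \in \ell^\infty(\mathbb{Z}, X)$ satisfies $x_n = \sum_{k=-\infty}^{+\infty} G(n,k+1)(B(k)x_k + f_k)$ for all $n$, then $\|x\|_{\ell^\infty} \leq \frac{1+e^{-\alpha}}{1-e^{-\alpha}} \cdot \frac{K \|f\|_{\ell^\infty}}{1 - \rho}$, where $\rho := \delta \frac{1+e^{-\alpha}}{1-e^{-\alpha}}$. -/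
lemma aux_hasSum {r : ℝ} (h0 : 0 ≤ r) (h1 : r < 1) :
    HasSum (fun j : ℤ => r ^ j.natAbs) ((1 + r) / (1 - r)) := by
  have hf : HasSum (fun n : ℕ => r ^ ((n : ℤ)).natAbs) (1 / (1 - r)) := by
    simpa [one_div] using hasSum_geometric_of_lt_one h0 h1
  have hg : HasSum (fun n : ℕ => r ^ ((-(n + 1) : ℤ)).natAbs) (r / (1 - r)) := by
    have h := (hasSum_geometric_of_lt_one h0 h1).mul_left r
    have heq : ∀ n : ℕ, r ^ ((-(n + 1) : ℤ)).natAbs = r * r ^ n := by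
      intro n
      have : ((-(n + 1) : ℤ)).natAbs = n + 1 := by
        rw [Int.natAbs_neg]
        exact_mod_cast Int.natAbs_natCast (n + 1)
      rw [this, pow_succ, mul_comm]
    rw [div_eq_mul_inv]
    simp only [heq]
    exact h
  have h := HasSum.of_nat_of_neg_add_one (f := fun j : ℤ => r ^ j.natAbs) hf hg
  have heq : 1 / (1 - r) + r / (1 - r) = (1 + r) / (1 - r) := by ring
  rwa [heq] at h

lemma aux_hasSum' {r : ℝ} (h0 : 0 ≤ r) (h1 : r < 1) (a : ℤ) :
    HasSum (fun k : ℤ => r ^ (a - k).natAbs) ((1 + r) / (1 - r)) := by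
  have h := (Equiv.subLeft a).hasSum_iff (f := fun j : ℤ => r ^ j.natAbs)
    (a := (1 + r) / (1 - r))
  exact h.mpr (aux_hasSum h0 h1)

/-- A priori bound for the bounded solution of the perturbed nonhomogeneous equation. -/
theorem stmt_3 {X : Type*} [NormedAddCommGroup X] [NormedSpace ℝ X] [CompleteSpace X]
    (α K δ : ℝ) (hα : 0 < α) (hK : 1 ≤ K)
    (hδ0 : 0 ≤ δ) (hδ : δ < (1 - Real.exp (-α)) / (1 + Real.exp (-α)))
    (G : ℤ → ℤ → X →L[ℝ] X)
    (hG : ∀ n k : ℤ, ‖G n k‖ ≤ K * Real.exp (-α * ((|n - k| : ℤ) : ℝ)))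
    (B : ℤ → X →L[ℝ] X) (hB : ∀ k, ‖B k‖ ≤ δ * K⁻¹)
    (f : ℤ → X) (hf : ∃ C, ∀ n, ‖f n‖ ≤ C)
    (x : ℤ → X) (hx : ∃ C, ∀ n, ‖x n‖ ≤ C)
    (hfix : ∀ n : ℤ, x n = ∑' k : ℤ, G n (k + 1) (B k (x k) + f k)) :
    ∀ n : ℤ, ‖x n‖ ≤ (1 + Real.exp (-α)) / (1 - Real.exp (-α)) *
      (K * (⨆ m : ℤ, ‖f m‖) / (1 - δ * (1 + Real.exp (-α)) / (1 - Real.exp (-α)))) := by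
  set r := Real.exp (-α) with hr_def
  have hr0 : 0 < r := Real.exp_pos _
  have hr1 : r < 1 := by
    rw [hr_def, Real.exp_lt_one_iff]; linarith
  have h1r : 0 < 1 - r := by linarith
  have h1r' : 0 < 1 + r := by linarith
  set S := (1 + r) / (1 - r) with hS_def
  have hS0 : 0 < S := div_pos h1r' h1r
  have hρ : δ * S < 1 := by
    rw [lt_div_iff₀ h1r'] at hδ
    rw [hS_def, mul_div_assoc']
    rw [div_lt_one h1r]
    linarith
  have hK0 : 0 < K := by linarith
  -- sups
  obtain ⟨Cx, hCx⟩ := hx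
  obtain ⟨Cf, hCf⟩ := hf
  set M := ⨆ m : ℤ, ‖x m‖ with hM_def
  set F := ⨆ m : ℤ, ‖f m‖ with hF_def
  have hbx : BddAbove (Set.range fun m : ℤ => ‖x m‖) := ⟨Cx, by rintro _ ⟨m, rfl⟩; exact hCx m⟩
  have hbf : BddAbove (Set.range fun m : ℤ => ‖f m‖) := ⟨Cf, by rintro _ ⟨m, rfl⟩; exact hCf m⟩
  have hxM : ∀ k, ‖x k‖ ≤ M := fun k => le_ciSup hbx k
  have hfF : ∀ k, ‖f k‖ ≤ F := fun k => le_ciSup hbf k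
  have hM0 : 0 ≤ M := (norm_nonneg _).trans (hxM 0)
  have hF0 : 0 ≤ F := (norm_nonneg _).trans (hfF 0)
  set c := δ * M + K * F with hc_def
  have hc0 : 0 ≤ c := by positivity
  -- per-n sum bound
  have key : ∀ n : ℤ, ‖x n‖ ≤ S * c := by
    intro n
    have hgeom : HasSum (fun k : ℤ => r ^ (n - (k + 1)).natAbs) S := by
      have hfun : (fun k : ℤ => r ^ (n - (k + 1)).natAbs)
          = fun k : ℤ => r ^ ((n - 1) - k).natAbs := by
        funext k
        congr 1
        omega
      rw [hfun]
      exact aux_hasSum' hr0.le hr1 (n - 1)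
    have hterm : ∀ k : ℤ, ‖G n (k + 1) (B k (x k) + f k)‖ ≤ r ^ (n - (k + 1)).natAbs * c := by
      intro k
      have hGn : ‖G n (k + 1)‖ ≤ K * r ^ (n - (k + 1)).natAbs := by
        have h := hG n (k + 1)
        have he : Real.exp (-α * ((|n - (k + 1)| : ℤ) : ℝ)) = r ^ (n - (k + 1)).natAbs := by
          rw [hr_def, ← Real.exp_nat_mul]
          congr 1
          push_cast [Int.cast_abs, Nat.cast_natAbs]
          ring
        rwa [he] at h
      have hv : ‖B k (x k) + f k‖ ≤ δ * K⁻¹ * M + F := by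
        refine (norm_add_le _ _).trans (add_le_add ?_ (hfF k))
        calc ‖B k (x k)‖ ≤ ‖B k‖ * ‖x k‖ := (B k).le_opNorm _
          _ ≤ δ * K⁻¹ * M := by
              apply mul_le_mul (hB k) (hxM k) (norm_nonneg _)
              positivity
      calc ‖G n (k + 1) (B k (x k) + f k)‖
          ≤ ‖G n (k + 1)‖ * ‖B k (x k) + f k‖ := (G n (k + 1)).le_opNorm _
        _ ≤ (K * r ^ (n - (k + 1)).natAbs) * (δ * K⁻¹ * M + F) := by
            apply mul_le_mul hGn hv (norm_nonneg _)
            positivity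
        _ = r ^ (n - (k + 1)).natAbs * c := by
            rw [hc_def]
            field_simp
    have hsum2 : HasSum (fun k : ℤ => r ^ (n - (k + 1)).natAbs * c) (S * c) :=
      hgeom.mul_right c
    have hsummable : Summable (fun k : ℤ => ‖G n (k + 1) (B k (x k) + f k)‖) :=
      Summable.of_nonneg_of_le (fun k => norm_nonneg _) hterm hsum2.summable
    calc ‖x n‖ = ‖∑' k : ℤ, G n (k + 1) (B k (x k) + f k)‖ := by rw [hfix n]
      _ ≤ ∑' k : ℤ, ‖G n (k + 1) (B k (x k) + f k)‖ := norm_tsum_le_tsum_norm hsummable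
      _ ≤ ∑' k : ℤ, r ^ (n - (k + 1)).natAbs * c := Summable.tsum_le_tsum hterm hsummable hsum2.summable
      _ = S * c := hsum2.tsum_eq
  -- conclude
  have hMle : M ≤ S * c := ciSup_le key
  have hfinal : M ≤ S * (K * F / (1 - δ * S)) := by
    have h1 : 0 < 1 - δ * S := by linarith
    rw [mul_div_assoc', le_div_iff₀ h1]
    rw [hc_def] at hMle
    nlinarith [hMle]
  intro n
  have : δ * (1 + r) / (1 - r) = δ * S := by rw [hS_def]; ring
  rw [this]
  exact (hxM n).trans hfinal
end

section
/- Let $a > 0$ and $0 \leq \delta < \frac{1-e^{-a}}{1+e^{-a}}$. Then $\cosh^2 a - 1 - 2\delta \sinh a > 0$, and the quantity $\tilde{a} := -\ln(\cosh a - \sqrt{\cosh^2 a - 1 - 2\delta\sinh a})$ satisfies $0 < \tilde{a} \leq a$. -/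
/-- Well-definedness and bounds for the perturbed dichotomy exponent `ã`. -/
theorem stmt_10 (a δ : ℝ) (ha : 0 < a) (hδ0 : 0 ≤ δ)
    (hδ : δ < (1 - Real.exp (-a)) / (1 + Real.exp (-a))) :
    0 < Real.cosh a ^ 2 - 1 - 2 * δ * Real.sinh a ∧
    0 < -Real.log (Real.cosh a - Real.sqrt (Real.cosh a ^ 2 - 1 - 2 * δ * Real.sinh a)) ∧
    -Real.log (Real.cosh a - Real.sqrt (Real.cosh a ^ 2 - 1 - 2 * δ * Real.sinh a)) ≤ a := by
  set c := Real.cosh a with hc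
  set s := Real.sinh a with hs
  have he : Real.exp (-a) < 1 := Real.exp_lt_one_iff.mpr (by linarith)
  have hepos : (0:ℝ) < Real.exp (-a) := Real.exp_pos _
  have hE : Real.exp a * Real.exp (-a) = 1 := by
    rw [← Real.exp_add]; simp
  have hspos : 0 < s := Real.sinh_pos_iff.mpr ha
  have hc1 : 1 ≤ c := Real.one_le_cosh a
  have hsq : c ^ 2 = s ^ 2 + 1 := Real.cosh_sq a
  -- key inequality δ s < c - 1
  have hδ' : δ * (1 + Real.exp (-a)) < 1 - Real.exp (-a) := by
    rw [lt_div_iff₀ (by linarith)] at hδ; linarith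
  have hkey : δ * s < c - 1 := by
    rw [hc, hs, Real.cosh_eq, Real.sinh_eq]
    nlinarith [mul_pos hepos hepos, sq_nonneg (1 - Real.exp (-a))]
  have h1 : 0 < c ^ 2 - 1 - 2 * δ * s := by
    nlinarith
  refine ⟨h1, ?_⟩
  set D := Real.sqrt (c ^ 2 - 1 - 2 * δ * s) with hD
  have hD0 : 0 ≤ D := Real.sqrt_nonneg _
  have hDsq : D ^ 2 = c ^ 2 - 1 - 2 * δ * s := Real.sq_sqrt h1.le
  have hDle : D ≤ s := by
    rw [hD]
    calc Real.sqrt (c ^ 2 - 1 - 2 * δ * s) ≤ Real.sqrt (s ^ 2) := by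
          apply Real.sqrt_le_sqrt; nlinarith
      _ = s := Real.sqrt_sq hspos.le
  have hcs : c - s = Real.exp (-a) := Real.cosh_sub_sinh a
  have hpos : 0 < c - D := by linarith
  have hlt1 : c - D < 1 := by
    have : c - 1 < D := by
      rw [hD]
      rw [show c - 1 = Real.sqrt ((c - 1) ^ 2) from (Real.sqrt_sq (by linarith)).symm]
      apply Real.sqrt_lt_sqrt (by positivity)
      nlinarith
    linarith
  constructor
  · have := Real.log_neg hpos hlt1
    linarith
  · have : -a ≤ Real.log (c - D) := by
      rw [Real.le_log_iff_exp_le hpos]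
      linarith
    linarith
end
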